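/- Expectation of the modified minimax cost: for all bounded measurable f, g : S×A → ℝ, E[ C(f,f) − C(g,f) ] = ‖f − Tf‖_μ² − ‖g − Tf‖_μ²; in particular the conditional variance of the stochastic backup cancels exactly. -/

import Mathlib

open MeasureTheory ProbabilityTheory
open scoped ENNReal NNReal

noncomputable section

/-- Expected value of `f (s, ·)` under the policy kernel at state `s`: `f(s,π)`. -/
def polExp {S A : Type*} [MeasurableSpace S] [MeasurableSpace A]
    (pol : Kernel S A) (f : S × A → ℝ) (s : S) : ℝ :=
  ∫ a, f (s, a) ∂(pol s)

/-- The Bellman evaluation operator `(Tf)(s,a) = r(s,a) + γ E_{s' ∼ P(·|s,a)} f(s',π)`. -/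
def bellmanOp {S A : Type*} [MeasurableSpace S] [MeasurableSpace A]
    (γ : ℝ) (rew : S × A → ℝ) (P : Kernel (S × A) S) (pol : Kernel S A)
    (f : S × A → ℝ) : S × A → ℝ :=
  fun sa => rew sa + γ * ∫ s', polExp pol f s' ∂(P sa)

/-- Squared `L²(μ)` norm: `‖h‖_μ² = E_μ h²`. -/
def l2sq {X : Type*} [MeasurableSpace X] (μ : Measure X) (h : X → ℝ) : ℝ :=
  ∫ x, (h x) ^ 2 ∂μ

/-- `L²(μ)` norm `‖h‖_μ`. -/
def l2 {X : Type*} [MeasurableSpace X] (μ : Measure X) (h : X → ℝ) : ℝ :=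
  Real.sqrt (l2sq μ h)

/-- Distance in `L²(μ)` from `h` to the class `F`: `inf_{g ∈ F} ‖g − h‖_μ`. -/
def projDist {S A : Type*} [MeasurableSpace S] [MeasurableSpace A]
    (μ : Measure (S × A)) (F : Set ((S × A) → ℝ)) (h : (S × A) → ℝ) : ℝ :=
  sInf ((fun g => l2 μ (fun x => g x - h x)) '' F)

/-- Bellman error `‖f − Tf‖_μ`. -/
def bellErr {S A : Type*} [MeasurableSpace S] [MeasurableSpace A]
    (γ : ℝ) (rew : S × A → ℝ) (P : Kernel (S × A) S) (pol : Kernel S A)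
    (μ : Measure (S × A)) (f : (S × A) → ℝ) : ℝ :=
  l2 μ (fun x => f x - bellmanOp γ rew P pol f x)

/-- The localized class `F(r) = {f ∈ F : ‖f − Tf‖_μ ≤ r}`. -/
def Floc {S A : Type*} [MeasurableSpace S] [MeasurableSpace A]
    (γ : ℝ) (rew : S × A → ℝ) (P : Kernel (S × A) S) (pol : Kernel S A)
    (μ : Measure (S × A)) (F : Set ((S × A) → ℝ)) (r : ℝ) : Set ((S × A) → ℝ) :=
  {f ∈ F | bellErr γ rew P pol μ f ≤ r}

/-- The incompleteness function `I(r) = sup_{f ∈ F(r)} inf_{g ∈ F} ‖g − Tf‖_μ`. -/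
def Iloc {S A : Type*} [MeasurableSpace S] [MeasurableSpace A]
    (γ : ℝ) (rew : S × A → ℝ) (P : Kernel (S × A) S) (pol : Kernel S A)
    (μ : Measure (S × A)) (F : Set ((S × A) → ℝ)) (r : ℝ) : ℝ :=
  sSup ((fun f => projDist μ F (bellmanOp γ rew P pol f)) '' Floc γ rew P pol μ F r)

/-- The incompleteness factor
`β = sup_{f ∈ F, ‖f−Tf‖_μ > 0} inf_{g ∈ F} ‖g − Tf‖_μ / ‖f − Tf‖_μ`. -/
def betaFac {S A : Type*} [MeasurableSpace S] [MeasurableSpace A]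
    (γ : ℝ) (rew : S × A → ℝ) (P : Kernel (S × A) S) (pol : Kernel S A)
    (μ : Measure (S × A)) (F : Set ((S × A) → ℝ)) : ℝ :=
  sSup ((fun f => projDist μ F (bellmanOp γ rew P pol f) / bellErr γ rew P pol μ f) ''
    {f ∈ F | 0 < bellErr γ rew P pol μ f})

/-- The population minimax loss `M(f) = ‖f − Tf‖_μ² − inf_{g ∈ F} ‖g − Tf‖_μ²`. -/
def minimaxLoss {S A : Type*} [MeasurableSpace S] [MeasurableSpace A]
    (γ : ℝ) (rew : S × A → ℝ) (P : Kernel (S × A) S) (pol : Kernel S A)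
    (μ : Measure (S × A)) (F : Set ((S × A) → ℝ)) (f : (S × A) → ℝ) : ℝ :=
  l2sq μ (fun x => f x - bellmanOp γ rew P pol f x) -
    sInf ((fun g => l2sq μ (fun x => g x - bellmanOp γ rew P pol f x)) '' F)

/-- One step of the state-action chain: transition by `P` then act by `pol`. -/
def stepMeas {S A : Type*} [MeasurableSpace S] [MeasurableSpace A]
    (P : Kernel (S × A) S) (pol : Kernel S A) (sa : S × A) : Measure (S × A) :=
  (P sa).bind (fun s' => (pol s').map (fun a' => (s', a')))

/-- The law `P_h` of `(S_h, A_h)` when following `pol` from the state `s0`. -/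
def stepLaw {S A : Type*} [MeasurableSpace S] [MeasurableSpace A]
    (P : Kernel (S × A) S) (pol : Kernel S A) (s0 : S) : ℕ → Measure (S × A)
  | 0 => (pol s0).map (fun a => (s0, a))
  | (h + 1) => (stepLaw P pol s0 h).bind (stepMeas P pol)

/-- The discounted occupancy measure `d^π = (1−γ) Σ_{h≥0} γ^h P_h`. -/
def occMeas {S A : Type*} [MeasurableSpace S] [MeasurableSpace A]
    (γ : ℝ) (P : Kernel (S × A) S) (pol : Kernel S A) (s0 : S) : Measure (S × A) :=
  ENNReal.ofReal (1 - γ) •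
    Measure.sum (fun h : ℕ => ENNReal.ofReal γ ^ h • stepLaw P pol s0 h)

/-- The prediction error `E(f) = (f* − f)(s₀, π)`. -/
def predErr {S A : Type*} [MeasurableSpace S] [MeasurableSpace A]
    (pol : Kernel S A) (fstar f : S × A → ℝ) (s0 : S) : ℝ :=
  polExp pol (fun x => fstar x - f x) s0

/-- The concentrability coefficient `C = sup_{f ∈ F} ‖f − Tf‖_π² / ‖f − Tf‖_μ²`. -/
def concCoef {S A : Type*} [MeasurableSpace S] [MeasurableSpace A]
    (γ : ℝ) (rew : S × A → ℝ) (P : Kernel (S × A) S) (pol : Kernel S A)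
    (μ dpi : Measure (S × A)) (F : Set ((S × A) → ℝ)) : ℝ :=
  sSup ((fun f => l2sq dpi (fun x => f x - bellmanOp γ rew P pol f x) /
      l2sq μ (fun x => f x - bellmanOp γ rew P pol f x)) '' F)

/-- The law of a data tuple `(s, a, R, s')` with `(s,a) ∼ μ`, `R ∼ RL(s,a)`,
`s' ∼ P(·|s,a)`. -/
def tupleLaw {S A : Type*} [MeasurableSpace S] [MeasurableSpace A]
    (μ : Measure (S × A)) (RL : Kernel (S × A) ℝ) (P : Kernel (S × A) S) :
    Measure ((S × A) × ℝ × S) :=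
  μ.bind (fun sa => ((RL sa).prod (P sa)).map (fun rs => (sa, rs)))

/-- The squared TD cost `C(g,f) = (g(s,a) − R − γ f(s',π))²` of a tuple. -/
def tdCost {S A : Type*} [MeasurableSpace S] [MeasurableSpace A]
    (γ : ℝ) (pol : Kernel S A) (g f : S × A → ℝ) (t : (S × A) × ℝ × S) : ℝ :=
  (g t.1 - t.2.1 - γ * polExp pol f t.2.2) ^ 2

/-- The empirical loss `L̂(g,f)`: the average of the squared TD cost over the dataset. -/
def empLoss {S A : Type*} [MeasurableSpace S] [MeasurableSpace A]
    (γ : ℝ) (pol : Kernel S A) {n : ℕ} (D : Fin n → (S × A) × ℝ × S)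
    (g f : S × A → ℝ) : ℝ :=
  (∑ i, tdCost γ pol g f (D i)) / n

/-- The empirical minimax objective `M̂(f) = L̂(f,f) − inf_{g ∈ F} L̂(g,f)`. -/
def empMinimax {S A : Type*} [MeasurableSpace S] [MeasurableSpace A]
    (γ : ℝ) (pol : Kernel S A) (F : Set ((S × A) → ℝ)) {n : ℕ}
    (D : Fin n → (S × A) × ℝ × S) (f : S × A → ℝ) : ℝ :=
  empLoss γ pol D f f - sInf ((fun g => empLoss γ pol D g f) '' F)

/-- `f̂` is an empirical minimizer of `M̂` over `F`. -/
def IsEmpMinimizer {S A : Type*} [MeasurableSpace S] [MeasurableSpace A]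
    (γ : ℝ) (pol : Kernel S A) (F : Set ((S × A) → ℝ)) {n : ℕ}
    (D : Fin n → (S × A) × ℝ × S) (fhat : S × A → ℝ) : Prop :=
  fhat ∈ F ∧ ∀ f ∈ F, empMinimax γ pol F D fhat ≤ empMinimax γ pol F D f

/-- The law of a single Rademacher sign: `±1` with probability `1/2` each. -/
def signMeas : Measure ℝ :=
  (2⁻¹ : ℝ≥0∞) • Measure.dirac (1 : ℝ) + (2⁻¹ : ℝ≥0∞) • Measure.dirac (-1 : ℝ)

/-- Rademacher complexity of a class `H` with `n` covariates drawn i.i.d. from `ξ`: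
`R_n[H] = E sup_{h ∈ H} |(1/n) Σ_i ε_i h(x_i)|`. -/
def radComp {X : Type*} [MeasurableSpace X] (ξ : Measure X) (n : ℕ)
    (H : Set (X → ℝ)) : ℝ :=
  ∫ p, sSup ((fun h => |(∑ i, p.2 i * h (p.1 i)) / n|) '' H)
    ∂((Measure.pi (fun _ : Fin n => ξ)).prod (Measure.pi (fun _ : Fin n => signMeas)))

/-- The `X`-process `X(f) = C(f,f) − C(g_f, f)` as a function of the data tuple. -/
def Xproc {S A : Type*} [MeasurableSpace S] [MeasurableSpace A]
    (γ : ℝ) (pol : Kernel S A) (gf : ((S × A) → ℝ) → (S × A) → ℝ)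
    (f : S × A → ℝ) : (S × A) × ℝ × S → ℝ :=
  fun t => tdCost γ pol f f t - tdCost γ pol (gf f) f t

/-- The `Y`-process `Y(g) = C(f*,f*) − C(g, f*)` as a function of the data tuple. -/
def Yproc {S A : Type*} [MeasurableSpace S] [MeasurableSpace A]
    (γ : ℝ) (pol : Kernel S A) (fstar g : S × A → ℝ) : (S × A) × ℝ × S → ℝ :=
  fun t => tdCost γ pol fstar fstar t - tdCost γ pol g fstar t

end

noncomputable section

/-- Expectation of the modified minimax cost: for all bounded
measurable `f, g`, `E[C(f,f) − C(g,f)] = ‖f − Tf‖_μ² − ‖g − Tf‖_μ²`; in particular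
the conditional variance of the stochastic backup cancels exactly. -/
theorem expectation_of_modified_minimax_cost
    {S A : Type*} [MeasurableSpace S] [MeasurableSpace A]
    (γ : ℝ) (hγ0 : 0 ≤ γ) (hγ1 : γ < 1)
    (rew : S × A → ℝ) (hrew_meas : Measurable rew)
    (hrew_bdd : ∀ x, rew x ∈ Set.Icc (0 : ℝ) 1)
    (P : Kernel (S × A) S) [IsMarkovKernel P]
    (pol : Kernel S A) [IsMarkovKernel pol]
    (μ : Measure (S × A)) [IsProbabilityMeasure μ]
    -- the reward kernel: conditional law of `R` given `(s,a)`, supported on `[0,1]`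
    -- with conditional mean `rew`
    (RL : Kernel (S × A) ℝ) [IsMarkovKernel RL]
    (hRL_supp : ∀ x, (RL x) (Set.Icc (0 : ℝ) 1)ᶜ = 0)
    (hRL_mean : ∀ x, (∫ u, u ∂(RL x)) = rew x)
    -- arbitrary bounded measurable functions
    (f : (S × A) → ℝ) (hf_meas : Measurable f) (hf_bdd : ∃ B : ℝ, ∀ x, |f x| ≤ B)
    (g : (S × A) → ℝ) (hg_meas : Measurable g) (hg_bdd : ∃ B : ℝ, ∀ x, |g x| ≤ B) :
    ∫ t, (tdCost γ pol f f t - tdCost γ pol g f t) ∂(tupleLaw μ RL P) =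
      l2sq μ (fun x => f x - bellmanOp γ rew P pol f x) -
        l2sq μ (fun x => g x - bellmanOp γ rew P pol f x) := by
  classical
  obtain ⟨Bf, hBf⟩ := hf_bdd
  obtain ⟨Bg, hBg⟩ := hg_bdd
  set κ : Kernel (S × A) (ℝ × S) := RL ×ₖ P with hκ
  -- tupleLaw as a compProd
  have htl : tupleLaw μ RL P = μ.compProd κ := by
    ext s hs
    rw [tupleLaw, Measure.bind_apply hs, Measure.compProd_apply hs]
    · refine lintegral_congr fun sa => ?_
      simp only [hκ, Kernel.prod_apply]
      rw [Measure.map_apply measurable_prodMk_left hs]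
    · refine (Measure.measurable_of_measurable_coe
        (fun sa => ((RL sa).prod (P sa)).map (fun rs => (sa, rs))) fun t ht => ?_).aemeasurable
      have : (fun sa => (((RL sa).prod (P sa)).map (fun rs => (sa, rs))) t)
          = fun sa => κ sa (Prod.mk sa ⁻¹' t) := by
        funext sa
        rw [Measure.map_apply measurable_prodMk_left ht, Kernel.prod_apply]
      rw [this]
      exact Kernel.measurable_kernel_prodMk_left ht
  -- the value function and the backup function
  set V : S → ℝ := polExp pol f with hV
  have hV_sm : StronglyMeasurable V := by
    have : StronglyMeasurable f := hf_meas.stronglyMeasurable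
    exact this.integral_kernel_prod_right'
  have hV_bdd : ∀ s, |V s| ≤ Bf := by
    intro s
    have h : ‖∫ a, f (s, a) ∂pol s‖ ≤ Bf * ((pol s) Set.univ).toReal :=
      norm_integral_le_of_norm_le_const (Filter.Eventually.of_forall fun a => by
        simpa [Real.norm_eq_abs] using hBf (s, a))
    simpa [hV, polExp, Real.norm_eq_abs] using h
  set W : (S × A) → ℝ := fun sa => ∫ s', V s' ∂(P sa) with hW
  have hW_sm : StronglyMeasurable W := by
    have : StronglyMeasurable (fun p : (S × A) × S => V p.2) :=
      hV_sm.comp_measurable measurable_snd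
    exact this.integral_kernel_prod_right'
  have hW_bdd : ∀ sa, |W sa| ≤ Bf := by
    intro sa
    have h : ‖∫ s', V s' ∂P sa‖ ≤ Bf * ((P sa) Set.univ).toReal :=
      norm_integral_le_of_norm_le_const (Filter.Eventually.of_forall fun s' => by
        simpa [Real.norm_eq_abs] using hV_bdd s')
    simpa [hW, Real.norm_eq_abs] using h
  set T : (S × A) → ℝ := fun x => rew x + γ * W x with hT
  have hT_eq : bellmanOp γ rew P pol f = T := rfl
  have hT_meas : Measurable T := hrew_meas.add (measurable_const.mul hW_sm.measurable)
  have hT_bdd : ∀ x, |T x| ≤ 1 + γ * Bf := by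
    intro x
    calc |T x| ≤ |rew x| + |γ * W x| := abs_add_le _ _
      _ ≤ 1 + γ * Bf := by
          have h1 : |rew x| ≤ 1 := by
            have := hrew_bdd x
            rw [abs_le]; constructor <;> [linarith [this.1]; exact this.2]
          have h2 : |γ * W x| = γ * |W x| := by rw [abs_mul, abs_of_nonneg hγ0]
          have h3 : γ * |W x| ≤ γ * Bf := mul_le_mul_of_nonneg_left (hW_bdd x) hγ0
          linarith
  -- inner integral computation
  have inner : ∀ sa : S × A,
      ∫ b, (tdCost γ pol f f (sa, b) - tdCost γ pol g f (sa, b)) ∂(κ sa)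
        = (f sa - T sa) ^ 2 - (g sa - T sa) ^ 2 := by
    intro sa
    have hκ_apply : κ sa = (RL sa).prod (P sa) := Kernel.prod_apply _ _ _
    -- the a.e. bound on the reward coordinate
    have hae : ∀ᵐ b : ℝ × S ∂((RL sa).prod (P sa)), |b.1| ≤ 1 := by
      rw [ae_iff]
      have hsub : {b : ℝ × S | ¬ |b.1| ≤ 1} ⊆ (Set.Icc (0:ℝ) 1)ᶜ ×ˢ Set.univ := by
        intro b hb
        simp only [Set.mem_setOf_eq, not_le] at hb
        constructor
        · intro hmem
          have := hmem.1; have := hmem.2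
          have : |b.1| ≤ 1 := abs_le.mpr ⟨by linarith [hmem.1], hmem.2⟩
          linarith
        · trivial
      refine measure_mono_null hsub ?_
      rw [Measure.prod_prod, hRL_supp sa, zero_mul]
    have hD'_int : Integrable (fun b : ℝ × S => b.1 + γ * V b.2) ((RL sa).prod (P sa)) := by
      refine (integrable_const (1 + γ * Bf)).mono'
        ((measurable_fst.add (measurable_const.mul
          (hV_sm.measurable.comp measurable_snd))).aestronglyMeasurable) ?_
      filter_upwards [hae] with b hb
      have h2 : |γ * V b.2| ≤ γ * Bf := by
        rw [abs_mul, abs_of_nonneg hγ0]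
        exact mul_le_mul_of_nonneg_left (hV_bdd b.2) hγ0
      calc ‖b.1 + γ * V b.2‖ ≤ |b.1| + |γ * V b.2| := abs_add_le _ _
        _ ≤ 1 + γ * Bf := add_le_add hb h2
    have hint_id : Integrable (fun r : ℝ => r) (RL sa) := by
      refine (integrable_const (1:ℝ)).mono' aestronglyMeasurable_id ?_
      rw [ae_iff]
      refine measure_mono_null ?_ (hRL_supp sa)
      intro r hr
      simp only [Set.mem_setOf_eq, not_le, Real.norm_eq_abs] at hr
      intro hmem
      have : |r| ≤ 1 := abs_le.mpr ⟨by linarith [hmem.1], hmem.2⟩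
      linarith
    have hV_int : Integrable V (P sa) := by
      refine (integrable_const Bf).mono' hV_sm.aestronglyMeasurable ?_
      exact Filter.Eventually.of_forall fun s' => by
        simpa [Real.norm_eq_abs] using hV_bdd s'
    -- ∫ (r + γ V s') over the product equals T sa - ... 
    have hD'_val : ∫ b : ℝ × S, (b.1 + γ * V b.2) ∂((RL sa).prod (P sa)) = T sa := by
      rw [MeasureTheory.integral_prod _ hD'_int]
      have : ∀ r : ℝ, ∫ s', (r + γ * V s') ∂(P sa) = r + γ * W sa := by
        intro r
        rw [integral_add (integrable_const r) (hV_int.const_mul γ),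
          integral_const, integral_const_mul]
        simp [hW]
      simp_rw [this]
      rw [integral_add hint_id (integrable_const _), integral_const]
      simp [hRL_mean sa, hT]
    -- expand the squares
    have hexp : ∀ b : ℝ × S,
        tdCost γ pol f f (sa, b) - tdCost γ pol g f (sa, b)
          = (f sa) ^ 2 - (g sa) ^ 2
            - (2 * (f sa - g sa)) * (b.1 + γ * V b.2) := by
      intro b
      simp only [tdCost, hV]
      ring
    rw [hκ_apply]
    calc ∫ b, (tdCost γ pol f f (sa, b) - tdCost γ pol g f (sa, b)) ∂((RL sa).prod (P sa))
        = ∫ b : ℝ × S, ((f sa) ^ 2 - (g sa) ^ 2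
            - (2 * (f sa - g sa)) * (b.1 + γ * V b.2)) ∂((RL sa).prod (P sa)) := by
          exact integral_congr_ae (Filter.Eventually.of_forall fun b => hexp b)
      _ = (f sa) ^ 2 - (g sa) ^ 2 - (2 * (f sa - g sa)) * T sa := by
          rw [integral_sub (integrable_const _) (hD'_int.const_mul _),
            integral_const, integral_const_mul, hD'_val]
          simp
      _ = (f sa - T sa) ^ 2 - (g sa - T sa) ^ 2 := by ring
  -- integrability of the integrand over the compProd
  have hD_meas : Measurable (fun t : (S × A) × ℝ × S =>
      tdCost γ pol f f t - tdCost γ pol g f t) := by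
    have hVm : Measurable fun t : (S × A) × ℝ × S => V t.2.2 :=
      hV_sm.measurable.comp (measurable_snd.comp measurable_snd)
    have h1 : Measurable fun t : (S × A) × ℝ × S =>
        (f t.1 - t.2.1 - γ * V t.2.2) ^ 2 :=
      (((hf_meas.comp measurable_fst).sub
        (measurable_fst.comp measurable_snd)).sub (measurable_const.mul hVm)).pow_const 2
    have h2 : Measurable fun t : (S × A) × ℝ × S =>
        (g t.1 - t.2.1 - γ * V t.2.2) ^ 2 :=
      (((hg_meas.comp measurable_fst).sub
        (measurable_fst.comp measurable_snd)).sub (measurable_const.mul hVm)).pow_const 2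
    exact h1.sub h2
  have hae_cp : ∀ᵐ t : (S × A) × ℝ × S ∂(μ.compProd κ), |t.2.1| ≤ 1 := by
    rw [ae_iff]
    have hms : MeasurableSet {t : (S × A) × ℝ × S | ¬ |t.2.1| ≤ 1} := by
      have : Measurable fun t : (S × A) × ℝ × S => |t.2.1| :=
        (measurable_fst.comp measurable_snd).abs
      exact (measurableSet_le this measurable_const).compl
    rw [Measure.compProd_apply hms]
    have : ∀ sa : S × A, κ sa (Prod.mk sa ⁻¹' {t : (S × A) × ℝ × S | ¬ |t.2.1| ≤ 1}) = 0 := by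
      intro sa
      rw [Kernel.prod_apply]
      refine measure_mono_null (t := (Set.Icc (0:ℝ) 1)ᶜ ×ˢ Set.univ) ?_ ?_
      · intro b hb
        simp only [Set.mem_preimage, Set.mem_setOf_eq, not_le] at hb
        refine ⟨fun hmem => ?_, trivial⟩
        have : |b.1| ≤ 1 := abs_le.mpr ⟨by linarith [hmem.1], hmem.2⟩
        linarith
      · rw [Measure.prod_prod, hRL_supp sa, zero_mul]
    rw [lintegral_congr this, lintegral_zero]
  have hD_int : Integrable (fun t : (S × A) × ℝ × S =>
      tdCost γ pol f f t - tdCost γ pol g f t) (μ.compProd κ) := by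
    refine (integrable_const ((Bf + 1 + γ * Bf) ^ 2 + (Bg + 1 + γ * Bf) ^ 2)).mono'
      hD_meas.aestronglyMeasurable ?_
    filter_upwards [hae_cp] with t ht
    have hb1 : |f t.1 - t.2.1 - γ * V t.2.2| ≤ Bf + 1 + γ * Bf := by
      have h2 : |γ * V t.2.2| ≤ γ * Bf := by
        rw [abs_mul, abs_of_nonneg hγ0]
        exact mul_le_mul_of_nonneg_left (hV_bdd t.2.2) hγ0
      calc |f t.1 - t.2.1 - γ * V t.2.2| ≤ |f t.1| + |t.2.1| + |γ * V t.2.2| := by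
            exact (abs_sub _ _).trans (add_le_add (abs_sub _ _) le_rfl)
        _ ≤ Bf + 1 + γ * Bf := by
            exact add_le_add (add_le_add (hBf t.1) ht) h2
    have hb2 : |g t.1 - t.2.1 - γ * V t.2.2| ≤ Bg + 1 + γ * Bf := by
      have h2 : |γ * V t.2.2| ≤ γ * Bf := by
        rw [abs_mul, abs_of_nonneg hγ0]
        exact mul_le_mul_of_nonneg_left (hV_bdd t.2.2) hγ0
      calc |g t.1 - t.2.1 - γ * V t.2.2| ≤ |g t.1| + |t.2.1| + |γ * V t.2.2| := by
            exact (abs_sub _ _).trans (add_le_add (abs_sub _ _) le_rfl)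
        _ ≤ Bg + 1 + γ * Bf := by
            exact add_le_add (add_le_add (hBg t.1) ht) h2
    have e1 : |(f t.1 - t.2.1 - γ * V t.2.2) ^ 2| ≤ (Bf + 1 + γ * Bf) ^ 2 := by
      rw [abs_pow]
      exact pow_le_pow_left₀ (abs_nonneg _) hb1 2
    have e2 : |(g t.1 - t.2.1 - γ * V t.2.2) ^ 2| ≤ (Bg + 1 + γ * Bf) ^ 2 := by
      rw [abs_pow]
      exact pow_le_pow_left₀ (abs_nonneg _) hb2 2
    have : tdCost γ pol f f t - tdCost γ pol g f t
        = (f t.1 - t.2.1 - γ * V t.2.2) ^ 2 - (g t.1 - t.2.1 - γ * V t.2.2) ^ 2 := rfl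
    rw [Real.norm_eq_abs, this]
    calc |(f t.1 - t.2.1 - γ * V t.2.2) ^ 2 - (g t.1 - t.2.1 - γ * V t.2.2) ^ 2|
        ≤ |(f t.1 - t.2.1 - γ * V t.2.2) ^ 2| + |(g t.1 - t.2.1 - γ * V t.2.2) ^ 2| :=
          abs_sub _ _
      _ ≤ (Bf + 1 + γ * Bf) ^ 2 + (Bg + 1 + γ * Bf) ^ 2 := add_le_add e1 e2
  -- put everything together
  have hfT_int : Integrable (fun x => (f x - T x) ^ 2) μ := by
    refine (integrable_const ((Bf + (1 + γ * Bf)) ^ 2)).mono'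
      (((hf_meas.sub hT_meas).pow_const 2).aestronglyMeasurable) ?_
    refine Filter.Eventually.of_forall fun x => ?_
    rw [Real.norm_eq_abs, abs_pow]
    refine pow_le_pow_left₀ (abs_nonneg _) ?_ 2
    exact (abs_sub _ _).trans (add_le_add (hBf x) (hT_bdd x))
  have hgT_int : Integrable (fun x => (g x - T x) ^ 2) μ := by
    refine (integrable_const ((Bg + (1 + γ * Bf)) ^ 2)).mono'
      (((hg_meas.sub hT_meas).pow_const 2).aestronglyMeasurable) ?_
    refine Filter.Eventually.of_forall fun x => ?_
    rw [Real.norm_eq_abs, abs_pow]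
    refine pow_le_pow_left₀ (abs_nonneg _) ?_ 2
    exact (abs_sub _ _).trans (add_le_add (hBg x) (hT_bdd x))
  rw [htl, Measure.integral_compProd hD_int]
  have : ∀ sa : S × A, ∫ b, (tdCost γ pol f f (sa, b) - tdCost γ pol g f (sa, b)) ∂(κ sa)
      = (f sa - T sa) ^ 2 - (g sa - T sa) ^ 2 := inner
  calc ∫ sa, ∫ b, (tdCost γ pol f f (sa, b) - tdCost γ pol g f (sa, b)) ∂(κ sa) ∂μ
      = ∫ sa, ((f sa - T sa) ^ 2 - (g sa - T sa) ^ 2) ∂μ :=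
        integral_congr_ae (Filter.Eventually.of_forall fun sa => this sa)
    _ = l2sq μ (fun x => f x - bellmanOp γ rew P pol f x) -
        l2sq μ (fun x => g x - bellmanOp γ rew P pol f x) := by
        rw [integral_sub hfT_int hgT_int]
        rfl

end
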